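/- Let I be a non-empty set. Then the bidual Banach algebra M_I(ℂ)** (with an Arens product) is strong pseudo-amenable if and only if I is finite. -/

import Mathlib

noncomputable section

open ContinuousLinearMap NormedSpace

/-- A directed index system for nets. -/
structure DirSys : Type 1 where
  ι : Type
  le : ι → ι → Prop
  refl : ∀ i, le i i
  trans : ∀ {i j k}, le i j → le j k → le i k
  nonempty : Nonempty ι
  directed : ∀ i j, ∃ k, le i k ∧ le j k

/-- Convergence of a net indexed by a directed system, in a (pseudo)metric space. -/
def DirSys.Tendsto (D : DirSys) {X : Type*} [PseudoMetricSpace X] (m : D.ι → X) (x : X) : Prop :=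
  ∀ ε : ℝ, 0 < ε → ∃ i, ∀ j, D.le i j → dist (m j) x < ε

variable (A : Type*) [NonUnitalNormedRing A] [NormedSpace ℂ A]
  [IsScalarTower ℂ A A] [SMulCommClass ℂ A A]

/-- The continuous bilinear forms on `A`, i.e. the dual space of the projective tensor
product `A ⊗̂ A`. -/
abbrev BilForms := A →L[ℂ] StrongDual ℂ A

/-- The bidual `(A ⊗̂ A)**` of the projective tensor product, realized concretely as the
dual space of the space of continuous bilinear forms on `A` (the latter being canonically,
isometrically, the dual of `A ⊗̂ A`). -/
abbrev TensorBidual := StrongDual ℂ (BilForms A)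

instance : NormedAddCommGroup (TensorBidual A) :=
  @ContinuousLinearMap.toNormedAddCommGroup ℂ ℂ (BilForms A) ℂ _ _ _ _ _ _ _ _

instance : NormedSpace ℂ (TensorBidual A) :=
  ContinuousLinearMap.toNormedSpace (𝕜 := ℂ) (𝕜₂ := ℂ) (E := BilForms A) (F := ℂ)
    (σ₁₂ := RingHom.id ℂ) (𝕜' := ℂ)

/-- The bidual `A**` of `A`. -/
abbrev Bidual := StrongDual ℂ (StrongDual ℂ A)

variable {A}

/-- The elementary tensor `x ⊗ y`, viewed inside `(A ⊗̂ A)**` via the canonical isometric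
embedding of `A ⊗̂ A` into its bidual. -/
def elemT (x y : A) : TensorBidual A :=
  (ContinuousLinearMap.apply ℂ ℂ y).comp (ContinuousLinearMap.apply ℂ (StrongDual ℂ A) x)

variable (A)

/-- The canonical isometric copy of `A ⊗̂ A` inside its bidual: the closure of the linear
span of the elementary tensors. -/
def ptp : Submodule ℂ (TensorBidual A) :=
  (Submodule.span ℂ {m : TensorBidual A | ∃ x y : A, m = elemT x y}).topologicalClosure

/-- The map `f ↦ f·a` on bilinear forms, `(f·a)(x,y) = f(ax, y)`; predual of the left
module action of `A` on `(A ⊗̂ A)**`. -/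
def leftBil (a : A) : BilForms A →L[ℂ] BilForms A :=
  (compL ℂ A A (StrongDual ℂ A)).flip (ContinuousLinearMap.mul ℂ A a)

/-- The map `f ↦ a·f` on bilinear forms, `(a·f)(x,y) = f(x, ya)`; predual of the right
module action of `A` on `(A ⊗̂ A)**`. -/
def rightBil (a : A) : BilForms A →L[ℂ] BilForms A :=
  compL ℂ A (StrongDual ℂ A) (StrongDual ℂ A)
    ((compL ℂ A A ℂ).flip ((ContinuousLinearMap.mul ℂ A).flip a))

variable {A}

/-- The left module action `a · m` of `A` on `(A ⊗̂ A)**`, extending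
`a · (x ⊗ y) = (a x) ⊗ y`. -/
def tsmulL (a : A) (m : TensorBidual A) : TensorBidual A := m.comp (leftBil A a)

/-- The right module action `m · a` of `A` on `(A ⊗̂ A)**`, extending
`(x ⊗ y) · a = x ⊗ (y a)`. -/
def tsmulR (a : A) (m : TensorBidual A) : TensorBidual A := m.comp (rightBil A a)

variable (A)

/-- The adjoint `π_A* : A* → (A ⊗̂ A)*` of the product morphism `π_A`, namely
`(π_A* f)(x, y) = f (x y)`. -/
def piStar : StrongDual ℂ A →L[ℂ] BilForms A :=
  ((compL ℂ A (A →L[ℂ] A) (StrongDual ℂ A)).flip (ContinuousLinearMap.mul ℂ A)).comp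
    (compL ℂ A A ℂ)

variable {A}

/-- The second adjoint `π_A** : (A ⊗̂ A)** → A**` of the product morphism. -/
def piSS (m : TensorBidual A) : Bidual A := m.comp (piStar A)

variable (A)

/-- The map `f ↦ f·a` on `A*`, `(f·a)(x) = f(ax)`. -/
def dualROp (a : A) : StrongDual ℂ A →L[ℂ] StrongDual ℂ A :=
  (compL ℂ A A ℂ).flip (ContinuousLinearMap.mul ℂ A a)

/-- The map `f ↦ a·f` on `A*`, `(a·f)(x) = f(xa)`. -/
def dualLOp (a : A) : StrongDual ℂ A →L[ℂ] StrongDual ℂ A :=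
  (compL ℂ A A ℂ).flip ((ContinuousLinearMap.mul ℂ A).flip a)

variable {A}

/-- The product `a · Φ` of `a ∈ A` and `Φ ∈ A**`: `(a·Φ)(f) = Φ(f·a)`. -/
def bsmulL (a : A) (Φ : Bidual A) : Bidual A := Φ.comp (dualROp A a)

/-- The product `Φ · a` of `Φ ∈ A**` and `a ∈ A`: `(Φ·a)(f) = Φ(a·f)`. -/
def bsmulR (a : A) (Φ : Bidual A) : Bidual A := Φ.comp (dualLOp A a)

/-- The canonical isometric embedding of `A` into its bidual. -/
def inclB (a : A) : Bidual A := NormedSpace.inclusionInDoubleDual ℂ A a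

variable (A)

/-- A Banach algebra `A` is *strong pseudo-amenable* if there is a (not necessarily bounded)
net `(m_α)` in `(A ⊗̂ A)**` such that `a·m_α − m_α·a → 0` and
`a·π_A**(m_α) = π_A**(m_α)·a → a` for every `a ∈ A`. -/
def StrongPseudoAmenable : Prop :=
  ∃ (D : DirSys) (m : D.ι → TensorBidual A),
    (∀ a : A, D.Tendsto (fun α => tsmulL a (m α) - tsmulR a (m α)) 0) ∧
    (∀ (a : A) (α : D.ι), bsmulL a (piSS (m α)) = bsmulR a (piSS (m α))) ∧
    (∀ a : A, D.Tendsto (fun α => bsmulR a (piSS (m α))) (inclB a))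

/-- A Banach algebra `A` is *pseudo-amenable* if there is a (not necessarily bounded)
net `(m_α)` in `A ⊗̂ A` such that `a·m_α − m_α·a → 0` and `π_A(m_α)a → a` for every `a ∈ A`. -/
def PseudoAmenable : Prop :=
  ∃ (D : DirSys) (m : D.ι → TensorBidual A),
    (∀ α, m α ∈ ptp A) ∧
    (∀ a : A, D.Tendsto (fun α => tsmulL a (m α) - tsmulR a (m α)) 0) ∧
    (∀ a : A, D.Tendsto (fun α => bsmulR a (piSS (m α))) (inclB a))

/-- A Banach algebra `A` is *pseudo-contractible* if there is a net `(m_α)` in `A ⊗̂ A`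
such that `a·m_α = m_α·a` and `π_A(m_α)a → a` for every `a ∈ A`. -/
def PseudoContractible : Prop :=
  ∃ (D : DirSys) (m : D.ι → TensorBidual A),
    (∀ α, m α ∈ ptp A) ∧
    (∀ (a : A) (α : D.ι), tsmulL a (m α) = tsmulR a (m α)) ∧
    (∀ a : A, D.Tendsto (fun α => bsmulR a (piSS (m α))) (inclB a))

/-- A Banach algebra `A` is *amenable* if it has a bounded approximate diagonal: a bounded
net `(m_α)` in `A ⊗̂ A` such that `a·m_α − m_α·a → 0` and `π_A(m_α)a → a` for every `a ∈ A`. -/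
def AmenableBanachAlgebra : Prop :=
  ∃ (D : DirSys) (m : D.ι → TensorBidual A) (C : ℝ),
    (∀ α, m α ∈ ptp A) ∧
    (∀ α, ‖m α‖ ≤ C) ∧
    (∀ a : A, D.Tendsto (fun α => tsmulL a (m α) - tsmulR a (m α)) 0) ∧
    (∀ a : A, D.Tendsto (fun α => bsmulR a (piSS (m α))) (inclB a))

end

/-- `(M, e)` is a realization of the Banach algebra `M_I(ℂ)` of `I × I` complex matrices
with finite `ℓ¹`-norm: the `e i j` are the standard matrix units `ε_{i,j}`, finite linear
combinations of them carry the `ℓ¹`-norm, and they have dense linear span. -/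
def IsMatrixUnitsL1 (I : Type) [DecidableEq I] (M : Type)
    [NonUnitalNormedRing M] [NormedSpace ℂ M] (e : I → I → M) : Prop :=
  (∀ i j k l : I, e i j * e k l = if j = k then e i l else 0) ∧
  (∀ (s : Finset (I × I)) (c : I × I → ℂ),
      ‖∑ p ∈ s, c p • e p.1 p.2‖ = ∑ p ∈ s, ‖c p‖) ∧
  ((Submodule.span ℂ (Set.range fun p : I × I => e p.1 p.2)).topologicalClosure = ⊤)

/-- The (first) Arens operation: for `Ψ ∈ A**` and `f ∈ A*`, the functional
`arensOp A Ψ f = Ψ · f ∈ A*` is given by `(Ψ · f)(x) = Ψ(f · x)` where `(f · x)(y) = f (x y)`.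
The first Arens product on the bidual `A**` is then `(Φ □ Ψ)(f) = Φ (arensOp A Ψ f)`,
that is, `Φ □ Ψ = Φ.comp (arensOp A Ψ)`. -/
noncomputable def arensOp (A : Type) [NonUnitalNormedRing A] [NormedSpace ℂ A] [IsScalarTower ℂ A A]
    [SMulCommClass ℂ A A] (Ψ : Bidual A) :
    StrongDual ℂ A →L[ℂ] StrongDual ℂ A :=
  (ContinuousLinearMap.compL ℂ A (StrongDual ℂ A) ℂ Ψ).comp (piStar A)
namespace SPAProof

open NormedSpace ContinuousLinearMap

variable {I : Type} [DecidableEq I] {M : Type} [NonUnitalNormedRing M] [NormedSpace ℂ M]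
  {e : I → I → M}

/-- The family of matrix units indexed by pairs. -/
def vv (e : I → I → M) : I × I → M := fun p => e p.1 p.2

lemma li_vv (hnorm : ∀ (s : Finset (I × I)) (c : I × I → ℂ),
      ‖∑ p ∈ s, c p • e p.1 p.2‖ = ∑ p ∈ s, ‖c p‖) :
    LinearIndependent ℂ (vv e) := by
  rw [linearIndependent_iff']
  intro s g hg p hp
  have h := hnorm s g
  rw [show ∑ p ∈ s, g p • e p.1 p.2 = 0 from hg, norm_zero] at h
  have h2 := (Finset.sum_eq_zero_iff_of_nonneg
    (fun q _ => norm_nonneg (g q))).1 h.symm p hp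
  exact norm_eq_zero.mp h2

variable (hli : LinearIndependent ℂ (vv e))
  (hnorm : ∀ (s : Finset (I × I)) (c : I × I → ℂ),
      ‖∑ p ∈ s, c p • e p.1 p.2‖ = ∑ p ∈ s, ‖c p‖)
  (hd : Dense ((Submodule.span ℂ (Set.range (vv e)) : Submodule ℂ M) : Set M))

/-- Coefficient functional on the span of the matrix units. -/
noncomputable def phi0 (q : I × I) :
    ↥(Submodule.span ℂ (Set.range (vv e))) →L[ℂ] ℂ := by
  refine LinearMap.mkContinuous ((Module.Basis.span hli).coord q) 1 ?_
  intro x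
  set b := Module.Basis.span hli with hb
  set c := b.repr x with hc
  have hx : (x : M) = ∑ p ∈ c.support, c p • vv e p := by
    conv_lhs => rw [← b.linearCombination_repr x]
    rw [Finsupp.linearCombination_apply, Finsupp.sum]
    rw [← hc]
    push_cast
    refine Finset.sum_congr rfl fun p _ => ?_
    rw [Module.Basis.span_apply]
  have hnx : ‖x‖ = ∑ p ∈ c.support, ‖c p‖ := by
    have : ‖x‖ = ‖(x : M)‖ := rfl
    rw [this, hx]; exact hnorm c.support c
  have hcoord : b.coord q x = c q := rfl
  rw [one_mul, hnx, hcoord]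
  by_cases hq : q ∈ c.support
  · exact Finset.single_le_sum (fun p _ => norm_nonneg (c p)) hq
  · rw [Finsupp.notMem_support_iff.mp hq]
    simp only [norm_zero]
    exact Finset.sum_nonneg fun p _ => norm_nonneg (c p)

/-- Coefficient functional on all of `M`, by density. -/
noncomputable def phi (q : I × I) : StrongDual ℂ M :=
  let _h := hd
  (phi0 hli hnorm q).extend (Submodule.span ℂ (Set.range (vv e))).subtypeL

lemma phi_sum (q : I × I) (s : Finset (I × I)) (c : I × I → ℂ) :
    phi hli hnorm hd q (∑ p ∈ s, c p • vv e p) = if q ∈ s then c q else 0 := by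
  classical
  set S := Submodule.span ℂ (Set.range (vv e))
  set b := Module.Basis.span hli with hb
  have hmem : ∀ p : I × I, vv e p ∈ S :=
    fun p => Submodule.subset_span (Set.mem_range_self p)
  set xS : S := ∑ p ∈ s, c p • ⟨vv e p, hmem p⟩ with hxS
  have hcoe : S.subtypeL xS = ∑ p ∈ s, c p • vv e p := by
    simp [hxS]
  rw [← hcoe]
  rw [show phi hli hnorm hd q (S.subtypeL xS) = phi0 hli hnorm q xS from
    ContinuousLinearMap.extend_eq _
      (by simpa [Submodule.coe_subtypeL', DenseRange, Subtype.range_coe] using hd.denseRange_val)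
      isometry_subtype_coe.isUniformInducing _]
  have hbase : ∀ p : I × I, (⟨vv e p, hmem p⟩ : S) = b p := by
    intro p
    exact Subtype.ext (by rw [Module.Basis.span_apply])
  have : phi0 hli hnorm q xS = b.coord q xS := rfl
  rw [this, hxS]
  simp only [map_sum, map_smul, hbase]
  have : ∀ p : I × I, b.coord q (b p) = if p = q then 1 else 0 := by
    intro p
    rw [Module.Basis.coord_apply, Module.Basis.repr_self, Finsupp.single_apply]
  simp only [this, smul_eq_mul, mul_ite, mul_one, mul_zero]
  exact Finset.sum_ite_eq' s q c

lemma phi_e (q : I × I) (i k : I) :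
    phi hli hnorm hd q (e i k) = if q = (i, k) then 1 else 0 := by
  have := phi_sum hli hnorm hd q {(i, k)} (fun _ => 1)
  simpa [vv] using this

end SPAProof
namespace SPAProof
variable {I : Type} [DecidableEq I] {M : Type} [NonUnitalNormedRing M] [NormedSpace ℂ M]
  [IsScalarTower ℂ M M] [SMulCommClass ℂ M M]
  {e : I → I → M}
  (hli : LinearIndependent ℂ (vv e))
  (hnorm : ∀ (s : Finset (I × I)) (c : I × I → ℂ),
      ‖∑ p ∈ s, c p • e p.1 p.2‖ = ∑ p ∈ s, ‖c p‖)
  (hd : Dense ((Submodule.span ℂ (Set.range (vv e)) : Submodule ℂ M) : Set M))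

set_option linter.unusedSectionVars false

lemma norm_sum_phi_le (s : Finset I) : ‖∑ i ∈ s, phi hli hnorm hd (i, i)‖ ≤ 1 := by
  classical
  set F := ∑ i ∈ s, phi hli hnorm hd (i, i) with hF
  refine ContinuousLinearMap.opNorm_le_bound _ zero_le_one fun x => ?_
  rw [one_mul]
  -- closed set argument
  have hclosed : IsClosed {x : M | ‖F x‖ ≤ ‖x‖} :=
    isClosed_le (F.continuous.norm) continuous_norm
  have hsub : ((Submodule.span ℂ (Set.range (vv e)) : Submodule ℂ M) : Set M)
      ⊆ {x : M | ‖F x‖ ≤ ‖x‖} := by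
    intro x hx
    rw [SetLike.mem_coe, Finsupp.mem_span_range_iff_exists_finsupp] at hx
    obtain ⟨c, hc⟩ := hx
    rw [Finsupp.sum] at hc
    have hFx : F x = ∑ i ∈ s, (if (i, i) ∈ c.support then c (i, i) else 0) := by
      rw [hF, ContinuousLinearMap.sum_apply]
      refine Finset.sum_congr rfl fun i _ => ?_
      rw [← hc]
      exact phi_sum hli hnorm hd (i, i) c.support c
    have hnormx : ‖x‖ = ∑ p ∈ c.support, ‖c p‖ := by
      rw [← hc]; exact hnorm c.support c
    simp only [Set.mem_setOf_eq, hFx, hnormx]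
    calc ‖∑ i ∈ s, (if (i, i) ∈ c.support then c (i, i) else 0)‖
        ≤ ∑ i ∈ s, ‖(if (i, i) ∈ c.support then c (i, i) else (0:ℂ))‖ :=
          norm_sum_le _ _
      _ = ∑ i ∈ s.filter (fun i => (i, i) ∈ c.support), ‖c (i, i)‖ := by
          rw [Finset.sum_filter]
          refine Finset.sum_congr rfl fun i _ => ?_
          split_ifs <;> simp
      _ = ∑ p ∈ (s.filter (fun i => (i, i) ∈ c.support)).image (fun i => (i, i)),
            ‖c p‖ := by
          rw [Finset.sum_image]
          intro a _ b _ h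
          exact (Prod.mk.injEq _ _ _ _ ▸ h).1
      _ ≤ ∑ p ∈ c.support, ‖c p‖ := by
          refine Finset.sum_le_sum_of_subset_of_nonneg ?_
            (fun p _ _ => norm_nonneg (c p))
          intro p hp
          simp only [Finset.mem_image, Finset.mem_filter] at hp
          obtain ⟨i, ⟨_, hi⟩, rfl⟩ := hp
          exact hi
  have : x ∈ {x : M | ‖F x‖ ≤ ‖x‖} := by
    have huniv : closure ((Submodule.span ℂ (Set.range (vv e)) : Submodule ℂ M) : Set M)
        = Set.univ := hd.closure_eq
    have := closure_mono hsub
    rw [huniv, hclosed.closure_eq] at this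
    exact this (Set.mem_univ x)
  exact this

lemma phi_comp_mulLeft (hmul : ∀ i j k l : I, e i j * e k l = if j = k then e i l else 0) (i k a c : I) :
    (phi hli hnorm hd (a, c)).comp (ContinuousLinearMap.mul ℂ M (e i k)) =
      if a = i then phi hli hnorm hd (k, c) else 0 := by
  refine ContinuousLinearMap.ext_on hd ?_
  rintro x ⟨p, rfl⟩
  simp only [ContinuousLinearMap.comp_apply, ContinuousLinearMap.mul_apply']
  have : e i k * vv e p = if k = p.1 then e i p.2 else 0 := hmul i k p.1 p.2
  rw [this]
  by_cases h1 : a = i <;> by_cases h2 : k = p.1 <;>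
    simp_all [phi_e hli hnorm hd, vv, Prod.ext_iff] <;> tauto

lemma phi_comp_mulRight (hmul : ∀ i j k l : I, e i j * e k l = if j = k then e i l else 0) (i k a c : I) :
    (phi hli hnorm hd (a, c)).comp ((ContinuousLinearMap.mul ℂ M).flip (e i k)) =
      if c = k then phi hli hnorm hd (a, i) else 0 := by
  refine ContinuousLinearMap.ext_on hd ?_
  rintro x ⟨p, rfl⟩
  simp only [ContinuousLinearMap.comp_apply, ContinuousLinearMap.flip_apply,
    ContinuousLinearMap.mul_apply']
  have : vv e p * e i k = if p.2 = i then e p.1 k else 0 := hmul p.1 p.2 i k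
  rw [this]
  by_cases h1 : c = k <;> by_cases h2 : p.2 = i <;>
    simp_all [phi_e hli hnorm hd, vv, Prod.ext_iff, eq_comm] <;> tauto

end SPAProof
namespace SPAProof
open NormedSpace ContinuousLinearMap

set_option linter.unusedSectionVars false

section RflLemmas
variable {A : Type*} [NonUnitalNormedRing A] [NormedSpace ℂ A]
  [IsScalarTower ℂ A A] [SMulCommClass ℂ A A]

lemma dualROp_apply (a : A) (f : StrongDual ℂ A) (x : A) : dualROp A a f x = f (a * x) := rfl
lemma dualLOp_apply (a : A) (f : StrongDual ℂ A) (x : A) : dualLOp A a f x = f (x * a) := rfl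
lemma bsmulL_apply (a : A) (Φ : Bidual A) (f : StrongDual ℂ A) : bsmulL a Φ f = Φ (dualROp A a f) := rfl
lemma bsmulR_apply (a : A) (Φ : Bidual A) (f : StrongDual ℂ A) : bsmulR a Φ f = Φ (dualLOp A a f) := rfl
lemma piSS_apply' (m : TensorBidual A) (f : StrongDual ℂ A) : piSS m f = m (piStar A f) := rfl
lemma inclB_apply (a : A) (f : StrongDual ℂ A) : inclB a f = f a := rfl
lemma piSS_elemT (x y : A) : piSS (elemT x y) = inclB (x * y) := rfl
lemma tsmulL_elemT (a x y : A) : tsmulL a (elemT x y) = elemT (a * x) y := rfl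
lemma tsmulR_elemT (a x y : A) : tsmulR a (elemT x y) = elemT x (y * a) := rfl
lemma elemT_zero_left (y : A) : elemT (0 : A) y = 0 := by
  ext f; show f 0 y = 0; rw [map_zero]; rfl
lemma elemT_zero_right (x : A) : elemT x (0 : A) = 0 := by
  ext f; show f x 0 = 0; rw [map_zero]
end RflLemmas

section Bridge
variable {M : Type} [NonUnitalNormedRing M] [NormedSpace ℂ M] [IsScalarTower ℂ M M]
  [SMulCommClass ℂ M M]
  {B : Type} [NonUnitalNormedRing B] [NormedSpace ℂ B] [IsScalarTower ℂ B B]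
  [SMulCommClass ℂ B B]

/-- Pullback of a functional on `M` to one on `B ≅ M**`. -/
noncomputable def fB (j : Bidual M ≃ₗᵢ[ℂ] B) (φ : StrongDual ℂ M) : StrongDual ℂ B :=
  (ContinuousLinearMap.apply ℂ ℂ φ).comp
    j.symm.toContinuousLinearEquiv.toContinuousLinearMap

variable (j : Bidual M ≃ₗᵢ[ℂ] B)

lemma fB_apply (φ : StrongDual ℂ M) (b : B) : fB j φ b = (j.symm b) φ := rfl

lemma fB_zero : fB j (0 : StrongDual ℂ M) = 0 := by
  ext b; show (j.symm b) 0 = 0; exact map_zero _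

lemma fB_sum {ι : Type*} (s : Finset ι) (φ : ι → StrongDual ℂ M) :
    ∑ i ∈ s, fB j (φ i) = fB j (∑ i ∈ s, φ i) := by
  ext b
  rw [ContinuousLinearMap.sum_apply]
  show _ = (j.symm b) (∑ i ∈ s, φ i)
  rw [map_sum]
  rfl

lemma norm_fB_le (φ : StrongDual ℂ M) : ‖fB j φ‖ ≤ ‖φ‖ := by
  refine ContinuousLinearMap.opNorm_le_bound _ (norm_nonneg φ) fun b => ?_
  rw [fB_apply]
  calc ‖(j.symm b) φ‖ ≤ ‖j.symm b‖ * ‖φ‖ := ContinuousLinearMap.le_opNorm _ _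
    _ = ‖φ‖ * ‖b‖ := by rw [j.symm.norm_map, mul_comm]

lemma dualROp_fB (hj : ∀ Φ Ψ : Bidual M, j.symm (j Φ * j Ψ) = Φ.comp (arensOp M Ψ)) (b : M) (φ : StrongDual ℂ M) :
    dualROp B (j (inclB b)) (fB j φ) = fB j (φ.comp (ContinuousLinearMap.mul ℂ M b)) := by
  ext z
  have h := hj (inclB b) (j.symm z)
  rw [j.apply_symm_apply] at h
  show (j.symm (j (inclB b) * z)) φ = (j.symm z) (φ.comp (ContinuousLinearMap.mul ℂ M b))
  rw [h]
  have h2 : piStar M φ b = φ.comp (ContinuousLinearMap.mul ℂ M b) := by ext y; rfl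
  show (j.symm z) (piStar M φ b) = _
  rw [h2]

lemma dualLOp_fB (hj : ∀ Φ Ψ : Bidual M, j.symm (j Φ * j Ψ) = Φ.comp (arensOp M Ψ)) (b : M) (φ : StrongDual ℂ M) :
    dualLOp B (j (inclB b)) (fB j φ) =
      fB j (φ.comp ((ContinuousLinearMap.mul ℂ M).flip b)) := by
  ext z
  have h := hj (j.symm z) (inclB b)
  rw [j.apply_symm_apply] at h
  show (j.symm (z * j (inclB b))) φ = (j.symm z) (φ.comp ((ContinuousLinearMap.mul ℂ M).flip b))
  rw [h]
  have h2 : arensOp M (inclB b) φ = φ.comp ((ContinuousLinearMap.mul ℂ M).flip b) := by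
    ext x; rfl
  show (j.symm z) (arensOp M (inclB b) φ) = _
  rw [h2]

lemma iB_mul (hj : ∀ Φ Ψ : Bidual M, j.symm (j Φ * j Ψ) = Φ.comp (arensOp M Ψ)) (a b : M) : j (inclB a) * j (inclB b) = j (inclB (a * b)) := by
  have h := hj (inclB a) (inclB b)
  have h2 : (inclB a : Bidual M).comp (arensOp M (inclB b)) = inclB (a * b) := by ext f; rfl
  rw [h2] at h
  calc j (inclB a) * j (inclB b) = j (j.symm (j (inclB a) * j (inclB b))) :=
        (j.apply_symm_apply _).symm
    _ = j (inclB (a * b)) := by rw [h]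

lemma fB_iB (φ : StrongDual ℂ M) (b : M) : fB j φ (j (inclB b)) = φ b := by
  rw [fB_apply, j.symm_apply_apply]; rfl

end Bridge
end SPAProof
namespace SPAProof
open NormedSpace ContinuousLinearMap

lemma forward
    (I : Type) [Nonempty I] [DecidableEq I]
    (M : Type) [NonUnitalNormedRing M] [NormedSpace ℂ M] [IsScalarTower ℂ M M]
    [SMulCommClass ℂ M M] [CompleteSpace M]
    (e : I → I → M) (hM : IsMatrixUnitsL1 I M e)
    (B : Type) [NonUnitalNormedRing B] [NormedSpace ℂ B] [IsScalarTower ℂ B B]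
    [SMulCommClass ℂ B B] [CompleteSpace B]
    (j : Bidual M ≃ₗᵢ[ℂ] B)
    (hj : ∀ Φ Ψ : Bidual M, j.symm (j Φ * j Ψ) = Φ.comp (arensOp M Ψ)) :
    StrongPseudoAmenable B → Finite I := by
  obtain ⟨hmul, hnorm, hcl⟩ := hM
  have hli : LinearIndependent ℂ (vv e) := li_vv hnorm
  have hd : Dense ((Submodule.span ℂ (Set.range (vv e)) : Submodule ℂ M) : Set M) :=
    Submodule.dense_iff_topologicalClosure_eq_top.mpr hcl
  rintro ⟨D, m, _h1, h2, h3⟩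
  -- notation
  have key : ∀ (α : D.ι) (i k : I),
      piSS (m α) (fB j (phi hli hnorm hd (k, k))) =
        piSS (m α) (fB j (phi hli hnorm hd (i, i))) := by
    intro α i k
    have h := h2 (j (inclB (e i k))) α
    have hL := congrArg (fun g => g (fB j (phi hli hnorm hd (i, k)))) h
    simp only [bsmulL_apply, bsmulR_apply] at hL
    rw [dualROp_fB j hj (e i k), dualLOp_fB j hj (e i k),
      phi_comp_mulLeft hli hnorm hd hmul i k i k,
      phi_comp_mulRight hli hnorm hd hmul i k i k, if_pos rfl, if_pos rfl] at hL
    exact hL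
  obtain ⟨i0⟩ := ‹Nonempty I›
  -- norm bounds
  have hnorm_f : ∀ s : Finset I, ‖∑ i ∈ s, fB j (phi hli hnorm hd (i, i))‖ ≤ 1 := by
    intro s
    rw [fB_sum]
    exact le_trans (norm_fB_le j _) (norm_sum_phi_le hli hnorm hd s)
  have hnorm_f1 : ∀ i : I, ‖fB j (phi hli hnorm hd (i, i))‖ ≤ 1 := by
    intro i
    have := hnorm_f {i}
    simpa using this
  -- condition 3 at e i0 i0
  obtain ⟨α0, hα0⟩ := h3 (j (inclB (e i0 i0))) (1/2) (by norm_num)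
  have hdist := hα0 α0 (D.refl α0)
  set Φ0 : Bidual B := piSS (m α0) with hΦ0
  set lam : ℂ := Φ0 (fB j (phi hli hnorm hd (i0, i0))) with hlam
  have heval : ‖lam - 1‖ < 1/2 := by
    have h1 : bsmulR (j (inclB (e i0 i0))) Φ0 (fB j (phi hli hnorm hd (i0, i0))) = lam := by
      rw [bsmulR_apply, dualLOp_fB j hj (e i0 i0),
        phi_comp_mulRight hli hnorm hd hmul i0 i0 i0 i0, if_pos rfl]
    have h2' : inclB (j (inclB (e i0 i0))) (fB j (phi hli hnorm hd (i0, i0))) = 1 := by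
      rw [inclB_apply, fB_iB, phi_e hli hnorm hd, if_pos rfl]
    calc ‖lam - 1‖
        = ‖(bsmulR (j (inclB (e i0 i0))) Φ0 - inclB (j (inclB (e i0 i0))))
            (fB j (phi hli hnorm hd (i0, i0)))‖ := by
          rw [ContinuousLinearMap.sub_apply, h1, h2']
      _ ≤ ‖bsmulR (j (inclB (e i0 i0))) Φ0 - inclB (j (inclB (e i0 i0)))‖ *
            ‖fB j (phi hli hnorm hd (i0, i0))‖ := ContinuousLinearMap.le_opNorm _ _
      _ ≤ ‖bsmulR (j (inclB (e i0 i0))) Φ0 - inclB (j (inclB (e i0 i0)))‖ * 1 := by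
          exact mul_le_mul_of_nonneg_left (hnorm_f1 i0) (by positivity)
      _ < 1/2 := by
          rw [mul_one]
          exact lt_of_eq_of_lt (dist_eq_norm (bsmulR (j (inclB (e i0 i0))) Φ0)
            (inclB (j (inclB (e i0 i0))))).symm hdist
  have hlam_half : (1:ℝ)/2 ≤ ‖lam‖ := by
    have h1 : (1:ℝ) = ‖(1:ℂ)‖ := by norm_num
    have h2' : ‖(1:ℂ)‖ = ‖lam - (lam - 1)‖ := by ring_nf
    have h3' : ‖lam - (lam - 1)‖ ≤ ‖lam‖ + ‖lam - 1‖ := norm_sub_le _ _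
    linarith [heval, h1 ▸ h2' ▸ h3']
  -- conclude finiteness
  by_contra hfin
  rw [not_finite_iff_infinite] at hfin
  set n : ℕ := ⌈2 * ‖Φ0‖⌉₊ + 1 with hn
  obtain ⟨s, hs⟩ := Infinite.exists_subset_card_eq I n
  have hsum : Φ0 (∑ i ∈ s, fB j (phi hli hnorm hd (i, i))) = (s.card : ℂ) * lam := by
    rw [map_sum]
    have : ∀ i ∈ s, Φ0 (fB j (phi hli hnorm hd (i, i))) = lam := fun i _ => key α0 i0 i
    rw [Finset.sum_congr rfl this, Finset.sum_const, nsmul_eq_mul]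
  have hbound : (s.card : ℝ) * ‖lam‖ ≤ ‖Φ0‖ := by
    calc (s.card : ℝ) * ‖lam‖ = ‖(s.card : ℂ) * lam‖ := by
          rw [norm_mul, Complex.norm_natCast]
      _ = ‖Φ0 (∑ i ∈ s, fB j (phi hli hnorm hd (i, i)))‖ := by rw [hsum]
      _ ≤ ‖Φ0‖ * ‖∑ i ∈ s, fB j (phi hli hnorm hd (i, i))‖ :=
          ContinuousLinearMap.le_opNorm _ _
      _ ≤ ‖Φ0‖ * 1 := mul_le_mul_of_nonneg_left (hnorm_f s) (by positivity)
      _ = ‖Φ0‖ := mul_one _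
  have hcard : (s.card : ℝ) ≤ 2 * ‖Φ0‖ := by
    have h1 : (s.card : ℝ) * (1/2) ≤ (s.card : ℝ) * ‖lam‖ :=
      mul_le_mul_of_nonneg_left hlam_half (Nat.cast_nonneg _)
    linarith
  rw [hs] at hcard
  have hceil : 2 * ‖Φ0‖ ≤ (⌈2 * ‖Φ0‖⌉₊ : ℝ) := Nat.le_ceil _
  rw [hn] at hcard
  push_cast at hcard
  linarith

end SPAProof
namespace SPAProof
open NormedSpace ContinuousLinearMap

section MoreRfl
variable {A : Type*} [NonUnitalNormedRing A] [NormedSpace ℂ A]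
  [IsScalarTower ℂ A A] [SMulCommClass ℂ A A]

lemma bsmulL_inclB (a b : A) : bsmulL a (inclB b) = inclB (a * b) := rfl
lemma bsmulR_inclB (a b : A) : bsmulR a (inclB b) = inclB (b * a) := rfl

instance bilFormsContinuousAdd : ContinuousAdd (BilForms A) :=
  ⟨(inferInstance : IsTopologicalAddGroup (BilForms A)).continuous_add⟩

lemma leftBil_add (a a' : A) : leftBil A (a + a') = leftBil A a + leftBil A a' := by
  simp [leftBil, map_add]
set_option synthInstance.maxHeartbeats 400000 in
lemma leftBil_smul (t : ℂ) (a : A) : leftBil A (t • a) = t • leftBil A a := by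
  simp [leftBil, map_smul]
lemma rightBil_add (a a' : A) : rightBil A (a + a') = rightBil A a + rightBil A a' := by
  simp [rightBil, map_add]
set_option synthInstance.maxHeartbeats 400000 in
lemma rightBil_smul (t : ℂ) (a : A) : rightBil A (t • a) = t • rightBil A a := by
  simp [rightBil, map_smul]

lemma tsmulL_add_a (a a' : A) (m : TensorBidual A) :
    tsmulL (a + a') m = tsmulL a m + tsmulL a' m := by
  ext f
  show m (leftBil A (a + a') f) = _
  rw [leftBil_add, ContinuousLinearMap.add_apply, map_add]
  rfl
lemma tsmulL_smul_a (t : ℂ) (a : A) (m : TensorBidual A) :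
    tsmulL (t • a) m = t • tsmulL a m := by
  ext f
  show m (leftBil A (t • a) f) = _
  rw [leftBil_smul, ContinuousLinearMap.smul_apply, map_smul]
  rfl
lemma tsmulR_add_a (a a' : A) (m : TensorBidual A) :
    tsmulR (a + a') m = tsmulR a m + tsmulR a' m := by
  ext f
  show m (rightBil A (a + a') f) = _
  rw [rightBil_add, ContinuousLinearMap.add_apply, map_add]
  rfl
lemma tsmulR_smul_a (t : ℂ) (a : A) (m : TensorBidual A) :
    tsmulR (t • a) m = t • tsmulR a m := by
  ext f
  show m (rightBil A (t • a) f) = _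
  rw [rightBil_smul, ContinuousLinearMap.smul_apply, map_smul]
  rfl

lemma tsmulL_sum {ι : Type*} (a : A) (s : Finset ι) (m : ι → TensorBidual A) :
    tsmulL a (∑ i ∈ s, m i) = ∑ i ∈ s, tsmulL a (m i) := by
  ext f
  show (∑ i ∈ s, m i) (leftBil A a f) = _
  rw [ContinuousLinearMap.sum_apply, ContinuousLinearMap.sum_apply]
  rfl
lemma tsmulR_sum {ι : Type*} (a : A) (s : Finset ι) (m : ι → TensorBidual A) :
    tsmulR a (∑ i ∈ s, m i) = ∑ i ∈ s, tsmulR a (m i) := by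
  ext f
  show (∑ i ∈ s, m i) (rightBil A a f) = _
  rw [ContinuousLinearMap.sum_apply, ContinuousLinearMap.sum_apply]
  rfl
lemma piSS_sum {ι : Type*} (s : Finset ι) (m : ι → TensorBidual A) :
    piSS (∑ i ∈ s, m i) = ∑ i ∈ s, piSS (m i) := by
  ext f
  show (∑ i ∈ s, m i) (piStar A f) = _
  rw [ContinuousLinearMap.sum_apply, ContinuousLinearMap.sum_apply]
  rfl
end MoreRfl

/-- The trivial directed system. -/
def trivDirSys : DirSys where
  ι := PUnit
  le _ _ := True
  refl _ := trivial
  trans _ _ := trivial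
  nonempty := ⟨PUnit.unit⟩
  directed _ _ := ⟨PUnit.unit, trivial, trivial⟩

end SPAProof
namespace SPAProof
open NormedSpace ContinuousLinearMap

set_option maxHeartbeats 1600000 in
lemma backward
    (I : Type) [Nonempty I] [DecidableEq I]
    (M : Type) [NonUnitalNormedRing M] [NormedSpace ℂ M] [IsScalarTower ℂ M M]
    [SMulCommClass ℂ M M] [CompleteSpace M]
    (e : I → I → M) (hM : IsMatrixUnitsL1 I M e)
    (B : Type) [NonUnitalNormedRing B] [NormedSpace ℂ B] [IsScalarTower ℂ B B]
    [SMulCommClass ℂ B B] [CompleteSpace B]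
    (j : Bidual M ≃ₗᵢ[ℂ] B)
    (hj : ∀ Φ Ψ : Bidual M, j.symm (j Φ * j Ψ) = Φ.comp (arensOp M Ψ)) :
    Finite I → StrongPseudoAmenable B := by
  intro hI
  obtain ⟨hmul, hnorm, hcl⟩ := hM
  haveI : Fintype I := Fintype.ofFinite I
  have hd : Dense ((Submodule.span ℂ (Set.range (vv e)) : Submodule ℂ M) : Set M) :=
    Submodule.dense_iff_topologicalClosure_eq_top.mpr hcl
  haveI hfd : FiniteDimensional ℂ ↥(Submodule.span ℂ (Set.range (vv e))) :=
    FiniteDimensional.span_of_finite ℂ (Set.finite_range (vv e))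
  have hclosed : IsClosed ((Submodule.span ℂ (Set.range (vv e)) : Submodule ℂ M) : Set M) :=
    Submodule.closed_of_finiteDimensional _
  have hsp : Submodule.span ℂ (Set.range (vv e)) = ⊤ := by
    rw [← hclosed.submodule_topologicalClosure_eq]; exact hcl
  haveI : FiniteDimensional ℂ M :=
    ⟨hsp ▸ Submodule.fg_span (Set.finite_range (vv e))⟩
  haveI : FiniteDimensional ℂ (StrongDual ℂ M) :=
    Module.Finite.equiv (LinearMap.toContinuousLinearMap : (M →ₗ[ℂ] ℂ) ≃ₗ[ℂ] StrongDual ℂ M)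
  haveI : FiniteDimensional ℂ (Bidual M) :=
    Module.Finite.equiv
      (LinearMap.toContinuousLinearMap : (StrongDual ℂ M →ₗ[ℂ] ℂ) ≃ₗ[ℂ] Bidual M)
  have hr1 : Module.finrank ℂ (StrongDual ℂ M) = Module.finrank ℂ M := by
    rw [← (LinearMap.toContinuousLinearMap : (M →ₗ[ℂ] ℂ) ≃ₗ[ℂ] StrongDual ℂ M).finrank_eq,
      Module.finrank_linearMap, Module.finrank_self, mul_one]
  have hr2 : Module.finrank ℂ (Bidual M) = Module.finrank ℂ M := by
    rw [← (LinearMap.toContinuousLinearMap : (StrongDual ℂ M →ₗ[ℂ] ℂ) ≃ₗ[ℂ] Bidual M).finrank_eq,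
      Module.finrank_linearMap, Module.finrank_self, mul_one, hr1]
  -- surjectivity of the double dual embedding
  have hinj : Function.Injective (inclusionInDoubleDual ℂ M) :=
    (inclusionInDoubleDualLi ℂ (E := M)).injective
  have hsurj : Function.Surjective (inclusionInDoubleDual ℂ M) := by
    have h := (LinearMap.injective_iff_surjective_of_finrank_eq_finrank (K := ℂ) (V := M)
      (V₂ := Bidual M)
      (f := { toFun := inclusionInDoubleDual ℂ M, map_add' := (fun x y => (inclusionInDoubleDual ℂ M).toLinearMap.map_add' x y),
                  map_smul' := (fun c x => (inclusionInDoubleDual ℂ M).toLinearMap.map_smul' c x) })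
      hr2.symm).mp
    exact h hinj
  have hιsurj : Function.Surjective (fun c : M => j (inclB c)) :=
    j.surjective.comp hsurj
  obtain ⟨i0⟩ := ‹Nonempty I›
  -- identities in M
  have hEl : ∀ c : M, (∑ i : I, e i i) * c = c := by
    have hh : ContinuousLinearMap.mul ℂ M (∑ i : I, e i i) = ContinuousLinearMap.id ℂ M := by
      refine ContinuousLinearMap.ext_on hd ?_
      rintro x ⟨p, rfl⟩
      show (∑ i : I, e i i) * vv e p = vv e p
      rw [Finset.sum_mul]
      have : ∀ i : I, e i i * vv e p = if i = p.1 then e i p.2 else 0 :=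
        fun i => hmul i i p.1 p.2
      rw [Finset.sum_congr rfl fun i _ => this i, Finset.sum_ite_eq' Finset.univ p.1
        (fun i => e i p.2), if_pos (Finset.mem_univ _)]
      rfl
    intro c
    exact congrArg (fun T => T c) hh
  have hEr : ∀ c : M, c * (∑ i : I, e i i) = c := by
    have hh : (ContinuousLinearMap.mul ℂ M).flip (∑ i : I, e i i)
        = ContinuousLinearMap.id ℂ M := by
      refine ContinuousLinearMap.ext_on hd ?_
      rintro x ⟨p, rfl⟩
      show vv e p * (∑ i : I, e i i) = vv e p
      rw [Finset.mul_sum]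
      have : ∀ i : I, vv e p * e i i = if p.2 = i then e p.1 i else 0 :=
        fun i => hmul p.1 p.2 i i
      rw [Finset.sum_congr rfl fun i _ => this i, Finset.sum_ite_eq Finset.univ p.2
        (fun i => e p.1 i), if_pos (Finset.mem_univ _)]
      rfl
    intro c
    exact congrArg (fun T => T c) hh
  have hE1 : ∀ b : B, j (inclB (∑ i : I, e i i)) * b = b := by
    intro b
    obtain ⟨c, rfl⟩ := hιsurj b
    rw [iB_mul j hj, hEl c]
  have hE2 : ∀ b : B, b * j (inclB (∑ i : I, e i i)) = b := by
    intro b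
    obtain ⟨c, rfl⟩ := hιsurj b
    rw [iB_mul j hj, hEr c]
  -- the diagonal
  set mm : TensorBidual B :=
    ∑ i : I, elemT (j (inclB (e i i0))) (j (inclB (e i0 i))) with hmm
  -- centrality
  have hcent : ∀ a : B, tsmulL a mm = tsmulR a mm := by
    have hcent0 : ∀ c : M, tsmulL (j (inclB c)) mm = tsmulR (j (inclB c)) mm := by
      let T1 : M →ₗ[ℂ] TensorBidual B :=
        { toFun := fun c => tsmulL (j (inclB c)) mm
          map_add' := by
            intro c c'
            simp only [inclB, map_add]
            exact tsmulL_add_a _ _ _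
          map_smul' := by
            intro t c
            simp only [inclB, map_smul, RingHom.id_apply]
            exact tsmulL_smul_a _ _ _ }
      let T2 : M →ₗ[ℂ] TensorBidual B :=
        { toFun := fun c => tsmulR (j (inclB c)) mm
          map_add' := by
            intro c c'
            simp only [inclB, map_add]
            exact tsmulR_add_a _ _ _
          map_smul' := by
            intro t c
            simp only [inclB, map_smul, RingHom.id_apply]
            exact tsmulR_smul_a _ _ _ }
      have h : T1 = T2 := by
        refine LinearMap.ext_on hsp ?_
        rintro x ⟨p, rfl⟩
        show tsmulL (j (inclB (vv e p))) mm = tsmulR (j (inclB (vv e p))) mm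
        rw [hmm, tsmulL_sum, tsmulR_sum]
        have hL : ∀ i : I, tsmulL (j (inclB (vv e p)))
            (elemT (j (inclB (e i i0))) (j (inclB (e i0 i)))) =
            if p.2 = i then elemT (j (inclB (e p.1 i0))) (j (inclB (e i0 i))) else 0 := by
          intro i
          rw [tsmulL_elemT, iB_mul j hj]
          show elemT (j (inclB (e p.1 p.2 * e i i0))) _ = _
          rw [hmul p.1 p.2 i i0]
          by_cases h : p.2 = i
          · rw [if_pos h, if_pos h]
          · rw [if_neg h, if_neg h]
            rw [show j (inclB (0 : M)) = 0 from
              (congrArg j (map_zero (inclusionInDoubleDual ℂ M))).trans j.map_zero]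
            exact elemT_zero_left _
        have hR : ∀ i : I, tsmulR (j (inclB (vv e p)))
            (elemT (j (inclB (e i i0))) (j (inclB (e i0 i)))) =
            if i = p.1 then elemT (j (inclB (e i i0))) (j (inclB (e i0 p.2))) else 0 := by
          intro i
          rw [tsmulR_elemT, iB_mul j hj]
          show elemT _ (j (inclB (e i0 i * e p.1 p.2))) = _
          rw [hmul i0 i p.1 p.2]
          by_cases h : i = p.1
          · rw [if_pos h, if_pos h, h]
          · rw [if_neg h, if_neg h]
            rw [show j (inclB (0 : M)) = 0 from
              (congrArg j (map_zero (inclusionInDoubleDual ℂ M))).trans j.map_zero]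
            exact elemT_zero_right _
        rw [Finset.sum_congr rfl fun i _ => hL i, Finset.sum_congr rfl fun i _ => hR i,
          Finset.sum_ite_eq Finset.univ p.2
            (fun i => elemT (j (inclB (e p.1 i0))) (j (inclB (e i0 i)))),
          Finset.sum_ite_eq' Finset.univ p.1
            (fun i => elemT (j (inclB (e i i0))) (j (inclB (e i0 p.2)))),
          if_pos (Finset.mem_univ _), if_pos (Finset.mem_univ _)]
      intro c
      exact congrArg (fun T => T c) h
    intro a
    obtain ⟨c, rfl⟩ := hιsurj a
    exact hcent0 c
  -- the image of the diagonal under piSS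
  have hpiSS : piSS mm = inclB (j (inclB (∑ i : I, e i i))) := by
    rw [hmm, piSS_sum]
    have h1 : ∀ i : I, piSS (elemT (j (inclB (e i i0))) (j (inclB (e i0 i)))) =
        inclB (j (inclB (e i i))) := by
      intro i
      rw [piSS_elemT, iB_mul j hj]
      show inclB (j (inclB (e i i0 * e i0 i))) = _
      rw [hmul i i0 i0 i, if_pos rfl]
    rw [Finset.sum_congr rfl fun i _ => h1 i]
    ext f
    rw [ContinuousLinearMap.sum_apply]
    show ∑ i : I, f (j (inclB (e i i))) = f (j (inclB (∑ i : I, e i i)))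
    simp only [inclB, ← map_sum]
    have hs : ∀ s : Finset I, ∑ x ∈ s, j (inclusionInDoubleDual ℂ M (e x x)) =
        j (inclusionInDoubleDual ℂ M (∑ x ∈ s, e x x)) := by
      intro s
      refine Finset.induction_on s ?_ ?_
      · simp only [Finset.sum_empty]
        exact ((congrArg j (map_zero (inclusionInDoubleDual ℂ M))).trans j.map_zero).symm
      · intro a s ha ih
        rw [Finset.sum_insert ha, Finset.sum_insert ha, ih]
        simp only [map_add]
    exact congrArg f (hs Finset.univ)
  -- assemble
  refine ⟨trivDirSys, fun _ => mm, ?_, ?_, ?_⟩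
  · intro a ε hε
    refine ⟨PUnit.unit, fun β _ => ?_⟩
    show dist (tsmulL a mm - tsmulR a mm) 0 < ε
    rw [hcent a, sub_self, dist_self]
    exact hε
  · intro a α
    rw [hpiSS, bsmulL_inclB, bsmulR_inclB, hE1 a, hE2 a]
  · intro a ε hε
    refine ⟨PUnit.unit, fun β _ => ?_⟩
    show dist (bsmulR a (piSS mm)) (inclB a) < ε
    rw [hpiSS, bsmulR_inclB, hE1 a, dist_self]
    exact hε
end SPAProof

/-- Let `I` be a non-empty set.  Then the bidual Banach algebra
`M_I(ℂ)**` (with the Arens product) is strong pseudo-amenable if and only if `I` is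
finite.  Here `B` is any Banach algebra isometrically isomorphic (via `j`) to the bidual
of a realization `M` of `M_I(ℂ)`, whose multiplication corresponds to the Arens product. -/
theorem strongPseudoAmenable_bidual_matrixAlgebra_iff
    (I : Type) [Nonempty I] [DecidableEq I]
    (M : Type) [NonUnitalNormedRing M] [NormedSpace ℂ M] [IsScalarTower ℂ M M]
    [SMulCommClass ℂ M M] [CompleteSpace M]
    (e : I → I → M) (hM : IsMatrixUnitsL1 I M e)
    (B : Type) [NonUnitalNormedRing B] [NormedSpace ℂ B] [IsScalarTower ℂ B B]
    [SMulCommClass ℂ B B] [CompleteSpace B]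
    (j : Bidual M ≃ₗᵢ[ℂ] B)
    (hj : ∀ Φ Ψ : Bidual M, j.symm (j Φ * j Ψ) = Φ.comp (arensOp M Ψ)) :
    StrongPseudoAmenable B ↔ Finite I := by
  constructor
  · exact SPAProof.forward I M e hM B j hj
  · exact SPAProof.backward I M e hM B j hj
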